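/- Assume θ_max‖θ‖₁L ≥ log(n+L). Then with probability at least 1 − 1/(n+L), max_{1≤i≤n} Σ_{l=1}^L Σ_{j=1}^n A_l(i,j) ≤ C·θ_max‖θ‖₁L, where one may take C = 1 + (2 + 2√10)/3; equivalently, ‖Σ_{l=1}^L D_l‖ ≤ C·θ_max‖θ‖₁L, where D_l is the diagonal degree matrix of A_l. -/

import Mathlib

open Matrix MeasureTheory ProbabilityTheory
open scoped BigOperators ENNReal

noncomputable section

/-- Euclidean norm of a finite real vector. -/
def vecNorm {m : ℕ} (v : Fin m → ℝ) : ℝ := Real.sqrt (∑ i, v i ^ 2)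

/-- Frobenius norm of a real matrix. -/
def frobNorm {m p : ℕ} (M : Matrix (Fin m) (Fin p) ℝ) : ℝ :=
  Real.sqrt (∑ i, ∑ j, M i j ^ 2)

/-- Spectral norm (ℓ² operator norm) of a real matrix. -/
def specNorm {m p : ℕ} (M : Matrix (Fin m) (Fin p) ℝ) : ℝ :=
  sSup ((fun x => vecNorm (M.mulVec x)) '' {x : Fin p → ℝ | vecNorm x ≤ 1})

open Classical in
/-- The k-th largest (1-indexed) eigenvalue in magnitude of a real symmetric matrix
(`0` if the matrix is not Hermitian). -/
def kthAbsEig {m : ℕ} (M : Matrix (Fin m) (Fin m) ℝ) (k : ℕ) : ℝ :=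
  if hM : M.IsHermitian then
    (((Finset.univ : Finset (Fin m)).val.map fun i => |hM.eigenvalues i|).sort (· ≤ ·)).getD
      (m - k) 0
  else 0

/-- `Z` is a community membership matrix: 0/1 entries, exactly one 1 per row,
every column nonzero. -/
def IsMembership {n K : ℕ} (Z : Matrix (Fin n) (Fin K) ℝ) : Prop :=
  (∀ i k, Z i k = 0 ∨ Z i k = 1) ∧ (∀ i, ∑ k, Z i k = 1) ∧ (∀ k, ∃ i, Z i k = 1)

/-- The MLDCSBM model hypotheses on the parameters `Z`, `θ`, `B`. -/
def MLDCSBM {n L K : ℕ} (Z : Matrix (Fin n) (Fin K) ℝ) (θ : Fin n → ℝ)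
    (B : Fin L → Matrix (Fin K) (Fin K) ℝ) : Prop :=
  IsMembership Z ∧ (∀ i, 0 < θ i ∧ θ i ≤ 1) ∧
    (∀ l, (B l).IsSymm ∧ ∀ a b, 0 ≤ B l a b ∧ B l a b ≤ 1)

/-- Ω_l = Θ Z B_l Zᵀ Θ. -/
def OmegaL {n K : ℕ} (θ : Fin n → ℝ) (Z : Matrix (Fin n) (Fin K) ℝ)
    (Bl : Matrix (Fin K) (Fin K) ℝ) : Matrix (Fin n) (Fin n) ℝ :=
  Matrix.diagonal θ * Z * Bl * Zᵀ * Matrix.diagonal θ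

def thetaMin {n : ℕ} (θ : Fin n → ℝ) : ℝ := sInf (Set.range θ)
def thetaMax {n : ℕ} (θ : Fin n → ℝ) : ℝ := sSup (Set.range θ)

/-- Minimum community size. -/
def nMin {n K : ℕ} (Z : Matrix (Fin n) (Fin K) ℝ) : ℝ :=
  sInf (Set.range fun k : Fin K => ∑ i, Z i k)

/-- Maximum community size. -/
def nMax {n K : ℕ} (Z : Matrix (Fin n) (Fin K) ℝ) : ℝ :=
  sSup (Set.range fun k : Fin K => ∑ i, Z i k)

/-- Column `k` of a matrix, as a vector. -/
def colVec {n K : ℕ} (U : Matrix (Fin n) (Fin K) ℝ) (k : Fin K) : Fin n → ℝ := fun i => U i k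

/-- Row-normalized version of a matrix: each row divided by its Euclidean norm. -/
def rowNormalize {n K : ℕ} (U : Matrix (Fin n) (Fin K) ℝ) : Matrix (Fin n) (Fin K) ℝ :=
  fun i k => U i k / vecNorm (fun j => U i j)

/-- Diagonal degree matrix of a square matrix. -/
def degDiag {n : ℕ} (M : Matrix (Fin n) (Fin n) ℝ) : Matrix (Fin n) (Fin n) ℝ :=
  Matrix.diagonal fun i => ∑ j, M i j


/-! ### Auxiliary lemmas for stmt8 -/


lemma my_reindex {Ωs ι κ : Type*} [MeasurableSpace Ωs] {μ : Measure Ωs}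
    {f : ι → Ωs → ℝ} (hf : iIndepFun f μ)
    [Nonempty κ] {g : κ → ι} (hg : Function.Injective g) :
    iIndepFun (fun k => f (g k)) μ := by
  rw [iIndepFun_iff] at hf ⊢
  intro s f' hmeas'
  classical
  have hinv : ∀ k, Function.invFun g (g k) = k := fun k => Function.leftInverse_invFun hg k
  set F : ι → Set Ωs := fun i => f' (Function.invFun g i) with hF
  have h1 : (⋂ k ∈ s, f' k) = ⋂ i ∈ s.image g, F i := by
    ext ω
    simp only [Set.mem_iInter, Finset.mem_image]
    constructor
    · rintro h i ⟨k, hk, rfl⟩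
      simpa [hF, hinv] using h k hk
    · intro h k hk
      simpa [hF, hinv] using h (g k) ⟨k, hk, rfl⟩
  have h2 : ∀ i ∈ s.image g, MeasurableSet[MeasurableSpace.comap (f i) inferInstance] (F i) := by
    intro i hi
    rcases Finset.mem_image.1 hi with ⟨k, hk, rfl⟩
    simpa [hF, hinv] using hmeas' k hk
  rw [h1, hf (s.image g) h2, Finset.prod_image (fun k _ k' _ h => hg h)]
  simp [hF, hinv]


lemma my_mgf_bern {Ωs : Type} [MeasurableSpace Ωs] (P : Measure Ωs) [IsProbabilityMeasure P]
    {X : Ωs → ℝ} (hm : Measurable X) (h01 : ∀ ω, X ω = 0 ∨ X ω = 1) {p : ℝ} (hp : 0 ≤ p)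
    (hb : P {ω | X ω = 1} = ENNReal.ofReal p) (t : ℝ) :
    mgf X P t = 1 + (Real.exp t - 1) * p := by
  have hE : MeasurableSet {ω | X ω = 1} := hm (measurableSet_singleton 1)
  have hXind : ∀ ω, X ω = Set.indicator {ω | X ω = 1} (fun _ => (1:ℝ)) ω := by
    intro ω
    rcases h01 ω with h | h <;>
      simp [Set.indicator_apply, Set.mem_setOf_eq, h]
  have hint : Integrable X P := by
    refine ((integrable_const (1:ℝ)).indicator hE).congr (ae_of_all _ fun ω => ?_)
    exact (hXind ω).symm
  have hiX : ∫ ω, X ω ∂P = p := by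
    rw [integral_congr_ae (ae_of_all _ hXind), integral_indicator_const _ hE, measureReal_def, hb,
      ENNReal.toReal_ofReal hp, smul_eq_mul, mul_one]
  have hptw : ∀ ω, Real.exp (t * X ω) = 1 + (Real.exp t - 1) * X ω := by
    intro ω
    rcases h01 ω with h | h <;> simp [h]
  rw [mgf]
  calc ∫ ω, Real.exp (t * X ω) ∂P = ∫ ω, (1 + (Real.exp t - 1) * X ω) ∂P :=
        integral_congr_ae (ae_of_all _ hptw)
    _ = 1 + (Real.exp t - 1) * p := by
        rw [integral_add (integrable_const 1) (hint.const_mul _), integral_const,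
          integral_const_mul, hiX]
        simp

lemma my_key_ineq : 5 ≤ Real.log 4 * ((5 + 2 * Real.sqrt 10) / 3) := by
  have h4 : (4:ℝ) = 2 ^ 2 := by norm_num
  have hlog : Real.log 4 = 2 * Real.log 2 := by
    rw [h4, Real.log_pow]; push_cast; ring
  have hl2 := Real.log_two_gt_d9
  have hs : Real.sqrt 10 ^ 2 = 10 := Real.sq_sqrt (by norm_num)
  have hs2 : (3.16227766 : ℝ) ≤ Real.sqrt 10 := by
    nlinarith [Real.sqrt_nonneg 10, hs]
  rw [hlog]
  nlinarith [hl2, hs2]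

lemma my_chernoff {ι : Type*} [Fintype ι] [Nonempty ι] {Ωs : Type} [MeasurableSpace Ωs]
    (P : Measure Ωs) [IsProbabilityMeasure P]
    (X : ι → Ωs → ℝ) (hm : ∀ k, Measurable (X k)) (h01 : ∀ k ω, X k ω = 0 ∨ X k ω = 1)
    (hind : iIndepFun X P)
    (p : ι → ℝ) (hp : ∀ k, 0 ≤ p k) (hb : ∀ k, P {ω | X k ω = 1} = ENNReal.ofReal (p k))
    {M : ℝ} (hM : ∑ k, p k ≤ M) :
    (P {ω | (5 + 2 * Real.sqrt 10) / 3 * M ≤ ∑ k, X k ω}).toReal ≤ Real.exp (-2 * M) := by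
  classical
  have hM0 : 0 ≤ M := le_trans (Finset.sum_nonneg fun k _ => hp k) hM
  set t := Real.log 4 with hT
  have ht : 0 ≤ t := Real.log_nonneg (by norm_num)
  have het : Real.exp t = 4 := Real.exp_log (by norm_num)
  set S : Ωs → ℝ := ∑ k ∈ Finset.univ, X k with hS
  have hSapp : ∀ ω, S ω = ∑ k, X k ω := fun ω => by
    rw [hS, Finset.sum_apply]
  have hSmeas : Measurable S := by
    rw [hS]
    have := Finset.measurable_sum (f := X) Finset.univ (fun k _ => hm k)
    convert this using 1
    funext ω; rw [Finset.sum_apply]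
  have hSbound : ∀ ω, S ω ≤ (Fintype.card ι : ℝ) := by
    intro ω
    rw [hSapp, ← Finset.card_univ]
    calc ∑ k, X k ω ≤ ∑ k : ι, (1:ℝ) := by
          refine Finset.sum_le_sum fun k _ => ?_
          rcases h01 k ω with h | h <;> simp [h]
      _ = (Finset.univ.card : ℝ) := by simp
  have hint : Integrable (fun ω => Real.exp (t * S ω)) P := by
    refine Integrable.mono' (integrable_const (Real.exp (t * (Fintype.card ι : ℝ))))
      ((hSmeas.const_mul t).exp.aestronglyMeasurable) (ae_of_all _ fun ω => ?_)
    rw [Real.norm_eq_abs, abs_of_pos (Real.exp_pos _)]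
    exact Real.exp_le_exp.2 (mul_le_mul_of_nonneg_left (hSbound ω) ht)
  have hcher := measure_ge_le_exp_mul_mgf (μ := P) (X := S)
    ((5 + 2 * Real.sqrt 10) / 3 * M) ht hint
  have hmgf : mgf S P t ≤ Real.exp (3 * M) := by
    rw [hS, hind.mgf_sum hm]
    calc ∏ k, mgf (X k) P t = ∏ k, (1 + (Real.exp t - 1) * p k) := by
          refine Finset.prod_congr rfl fun k _ => ?_
          exact my_mgf_bern P (hm k) (h01 k) (hp k) (hb k) t
      _ ≤ ∏ k, Real.exp ((Real.exp t - 1) * p k) := by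
          refine Finset.prod_le_prod (fun k _ => ?_) (fun k _ => ?_)
          · have : 0 ≤ (Real.exp t - 1) * p k := by
              have : (1:ℝ) ≤ Real.exp t := by rw [het]; norm_num
              nlinarith [hp k]
            linarith
          · have := Real.add_one_le_exp ((Real.exp t - 1) * p k)
            linarith
      _ = Real.exp (∑ k, (Real.exp t - 1) * p k) := (Real.exp_sum _ _).symm
      _ ≤ Real.exp (3 * M) := by
          refine Real.exp_le_exp.2 ?_
          rw [← Finset.mul_sum, het]
          nlinarith
  have hev : {ω | (5 + 2 * Real.sqrt 10) / 3 * M ≤ ∑ k, X k ω}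
      = {ω | (5 + 2 * Real.sqrt 10) / 3 * M ≤ S ω} := by
    ext ω; rw [Set.mem_setOf_eq, Set.mem_setOf_eq, hSapp]
  rw [hev]
  calc (P {ω | (5 + 2 * Real.sqrt 10) / 3 * M ≤ S ω}).toReal
      ≤ Real.exp (-t * ((5 + 2 * Real.sqrt 10) / 3 * M)) * mgf S P t := hcher
    _ ≤ Real.exp (-t * ((5 + 2 * Real.sqrt 10) / 3 * M)) * Real.exp (3 * M) := by
        exact mul_le_mul_of_nonneg_left hmgf (le_of_lt (Real.exp_pos _))
    _ = Real.exp (-t * ((5 + 2 * Real.sqrt 10) / 3 * M) + 3 * M) := (Real.exp_add _ _).symm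
    _ ≤ Real.exp (-2 * M) := by
        refine Real.exp_le_exp.2 ?_
        have key := my_key_ineq
        rw [← hT] at key
        nlinarith [mul_le_mul_of_nonneg_right key hM0]

lemma my_omega_bound {n K : ℕ} (θ : Fin n → ℝ) (Z : Matrix (Fin n) (Fin K) ℝ)
    (Bl : Matrix (Fin K) (Fin K) ℝ)
    (hθ : ∀ i, 0 ≤ θ i) (hZ01 : ∀ i k, Z i k = 0 ∨ Z i k = 1)
    (hZrow : ∀ i, ∑ k, Z i k = 1) (hB : ∀ a b, 0 ≤ Bl a b ∧ Bl a b ≤ 1)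
    (i j : Fin n) :
    0 ≤ OmegaL θ Z Bl i j ∧ OmegaL θ Z Bl i j ≤ θ i * θ j := by
  have hZ0 : ∀ i k, 0 ≤ Z i k := fun i k => by rcases hZ01 i k with h | h <;> simp [h]
  have hZ1 : ∀ i k, Z i k ≤ 1 := fun i k => by rcases hZ01 i k with h | h <;> simp [h]
  have hent : OmegaL θ Z Bl i j = θ i * (Z * Bl * Zᵀ) i j * θ j := by
    have h1 : OmegaL θ Z Bl = Matrix.diagonal θ * (Z * Bl * Zᵀ) * Matrix.diagonal θ := by
      simp [OmegaL, Matrix.mul_assoc]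
    rw [h1, Matrix.mul_diagonal, Matrix.diagonal_mul]
  have happ : (Z * Bl * Zᵀ) i j = ∑ b, (∑ a, Z i a * Bl a b) * Z j b := by
    rw [Matrix.mul_apply]
    refine Finset.sum_congr rfl fun b _ => ?_
    rw [Matrix.mul_apply, Matrix.transpose_apply]
  have hQ0 : 0 ≤ (Z * Bl * Zᵀ) i j := by
    rw [happ]
    refine Finset.sum_nonneg fun b _ => mul_nonneg (Finset.sum_nonneg fun a _ =>
      mul_nonneg (hZ0 i a) (hB a b).1) (hZ0 j b)
  have hQ1 : (Z * Bl * Zᵀ) i j ≤ 1 := by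
    rw [happ]
    calc ∑ b, (∑ a, Z i a * Bl a b) * Z j b ≤ ∑ b, (∑ a, Z i a) * Z j b := by
          refine Finset.sum_le_sum fun b _ => mul_le_mul_of_nonneg_right
            (Finset.sum_le_sum fun a _ => ?_) (hZ0 j b)
          calc Z i a * Bl a b ≤ Z i a * 1 :=
                mul_le_mul_of_nonneg_left (hB a b).2 (hZ0 i a)
            _ = Z i a := mul_one _
      _ = (∑ a, Z i a) * ∑ b, Z j b := by rw [Finset.mul_sum]
      _ = 1 := by rw [hZrow i, hZrow j, one_mul]
  constructor
  · rw [hent]; exact mul_nonneg (mul_nonneg (hθ i) hQ0) (hθ j)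
  · rw [hent]
    calc θ i * (Z * Bl * Zᵀ) i j * θ j ≤ θ i * 1 * θ j := by
          refine mul_le_mul_of_nonneg_right (mul_le_mul_of_nonneg_left hQ1 (hθ i)) (hθ j)
      _ = θ i * θ j := by ring


lemma my_minmax_inj {α : Type*} [LinearOrder α] (i : α) {j j' : α}
    (h1 : i ⊓ j = i ⊓ j') (h2 : i ⊔ j = i ⊔ j') : j = j' := by
  rcases le_total i j with h | h <;> rcases le_total i j' with h' | h'
  · rw [sup_eq_right.2 h, sup_eq_right.2 h'] at h2; exact h2
  · rw [sup_eq_right.2 h, sup_eq_left.2 h'] at h2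
    rw [inf_eq_left.2 h, inf_eq_right.2 h'] at h1
    exact h2.trans h1
  · rw [inf_eq_right.2 h, inf_eq_left.2 h'] at h1
    rw [sup_eq_left.2 h, sup_eq_right.2 h'] at h2
    exact h1.trans h2
  · rw [inf_eq_right.2 h, inf_eq_right.2 h'] at h1; exact h1

theorem stmt8 {n L K : ℕ} (hn : 0 < n) (hL : 0 < L) (hK : 0 < K) (hKn : K ≤ n)
    (Z : Matrix (Fin n) (Fin K) ℝ) (θ : Fin n → ℝ)
    (B : Fin L → Matrix (Fin K) (Fin K) ℝ)
    (hmodel : MLDCSBM Z θ B)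
    {Ωs : Type} [MeasurableSpace Ωs] (P : Measure Ωs) [IsProbabilityMeasure P]
    (A : Fin L → Ωs → Matrix (Fin n) (Fin n) ℝ)
    (hmeas : ∀ l i j, Measurable fun ω => A l ω i j)
    (hsymm : ∀ l ω, (A l ω).IsSymm)
    (h01 : ∀ l ω i j, A l ω i j = 0 ∨ A l ω i j = 1)
    (hbern : ∀ l i j, P {ω | A l ω i j = 1} = ENNReal.ofReal (OmegaL θ Z (B l) i j))
    (hindep : iIndepFun
      (fun (p : {q : Fin L × Fin n × Fin n // q.2.1 ≤ q.2.2}) ω =>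
        A p.1.1 ω p.1.2.1 p.1.2.2) P)
    (hsparse : Real.log (n + L) ≤ thetaMax θ * (∑ i, θ i) * L) :
    ENNReal.ofReal (1 - 1 / (n + L)) ≤
      P {ω | ∀ i, (∑ l, ∑ j, A l ω i j) ≤
        (1 + (2 + 2 * Real.sqrt 10) / 3) * (thetaMax θ * (∑ i', θ i') * L)} := by
  classical
  obtain ⟨⟨hZ01, hZrow, -⟩, hθ, hB⟩ := hmodel
  have hθ0 : ∀ i, 0 ≤ θ i := fun i => (hθ i).1.le
  set M : ℝ := thetaMax θ * (∑ i', θ i') * L with hMdef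
  have hθmax : ∀ i, θ i ≤ thetaMax θ := fun i =>
    le_csSup (Set.finite_range θ).bddAbove ⟨i, rfl⟩
  have hθmax0 : 0 ≤ thetaMax θ := le_trans (hθ0 ⟨0, hn⟩) (hθmax ⟨0, hn⟩)
  have hM0 : 0 ≤ M :=
    mul_nonneg (mul_nonneg hθmax0 (Finset.sum_nonneg fun i _ => hθ0 i)) (Nat.cast_nonneg L)
  have hn1 : (1:ℝ) ≤ n := by exact_mod_cast hn
  have hL1 : (1:ℝ) ≤ L := by exact_mod_cast hL
  have hx0 : (0:ℝ) < (n:ℝ) + L := by linarith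
  -- tail bound for each row
  have key : ∀ i : Fin n, P {ω | (5 + 2 * Real.sqrt 10) / 3 * M ≤ ∑ l, ∑ j, A l ω i j}
      ≤ ENNReal.ofReal (Real.exp (-2 * M)) := by
    intro i
    haveI : Nonempty {q : Fin L × Fin n × Fin n // q.2.1 ≤ q.2.2} :=
      ⟨⟨(⟨0, hL⟩, ⟨0, hn⟩, ⟨0, hn⟩), le_refl _⟩⟩
    haveI : Nonempty (Fin L × Fin n) := ⟨(⟨0, hL⟩, ⟨0, hn⟩)⟩
    set g : Fin L × Fin n → {q : Fin L × Fin n × Fin n // q.2.1 ≤ q.2.2} :=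
      fun q => ⟨(q.1, i ⊓ q.2, i ⊔ q.2), inf_le_sup⟩ with hgdef
    have hginj : Function.Injective g := by
      rintro ⟨l, j⟩ ⟨l', j'⟩ h
      simp only [hgdef, Subtype.mk.injEq, Prod.mk.injEq] at h
      obtain ⟨h1, h2, h3⟩ := h
      exact Prod.ext h1 (my_minmax_inj i h2 h3)
    have hindX : iIndepFun
        (fun q : Fin L × Fin n => fun ω => A q.1 ω (i ⊓ q.2) (i ⊔ q.2)) P :=
      my_reindex hindep hginj
    have hθprod : ∀ j : Fin n, θ (i ⊓ j) * θ (i ⊔ j) = θ i * θ j := by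
      intro j
      rcases le_total i j with h | h
      · rw [inf_eq_left.2 h, sup_eq_right.2 h]
      · rw [inf_eq_right.2 h, sup_eq_left.2 h, mul_comm]
    have hsum : ∑ q : Fin L × Fin n, OmegaL θ Z (B q.1) (i ⊓ q.2) (i ⊔ q.2) ≤ M := by
      calc ∑ q : Fin L × Fin n, OmegaL θ Z (B q.1) (i ⊓ q.2) (i ⊔ q.2)
          ≤ ∑ q : Fin L × Fin n, thetaMax θ * θ q.2 := by
            refine Finset.sum_le_sum fun q _ => ?_
            have hb := (my_omega_bound θ Z (B q.1) hθ0 hZ01 hZrow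
              (fun a b => (hB q.1).2 a b) (i ⊓ q.2) (i ⊔ q.2)).2
            rw [hθprod q.2] at hb
            refine le_trans hb (mul_le_mul_of_nonneg_right (hθmax i) (hθ0 q.2))
        _ = ∑ _l : Fin L, ∑ j : Fin n, thetaMax θ * θ j := by rw [Fintype.sum_prod_type]
        _ = M := by
            rw [Finset.sum_const, Finset.card_univ, Fintype.card_fin, ← Finset.mul_sum,
              nsmul_eq_mul, hMdef]
            ring
    have hch := my_chernoff P
      (fun q : Fin L × Fin n => fun ω => A q.1 ω (i ⊓ q.2) (i ⊔ q.2))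
      (fun q => hmeas _ _ _) (fun q ω => h01 _ _ _ _) hindX
      (fun q => OmegaL θ Z (B q.1) (i ⊓ q.2) (i ⊔ q.2))
      (fun q => (my_omega_bound θ Z (B q.1) hθ0 hZ01 hZrow
        (fun a b => (hB q.1).2 a b) (i ⊓ q.2) (i ⊔ q.2)).1)
      (fun q => hbern _ _ _) hsum
    have hswap : ∀ (l : Fin L) (ω : Ωs) (j : Fin n),
        A l ω i j = A l ω (i ⊓ j) (i ⊔ j) := by
      intro l ω j
      rcases le_total i j with h | h
      · rw [inf_eq_left.2 h, sup_eq_right.2 h]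
      · rw [inf_eq_right.2 h, sup_eq_left.2 h]
        exact ((hsymm l ω).apply i j).symm
    have hev : {ω | (5 + 2 * Real.sqrt 10) / 3 * M ≤ ∑ l, ∑ j, A l ω i j}
        = {ω | (5 + 2 * Real.sqrt 10) / 3 * M
            ≤ ∑ q : Fin L × Fin n, A q.1 ω (i ⊓ q.2) (i ⊔ q.2)} := by
      ext ω
      rw [Set.mem_setOf_eq, Set.mem_setOf_eq, Fintype.sum_prod_type]
      constructor <;> intro h <;>
        [ (refine le_trans h (le_of_eq ?_);
           exact Finset.sum_congr rfl fun l _ => Finset.sum_congr rfl fun j _ => hswap l ω j);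
          (refine le_trans h (le_of_eq ?_);
           exact Finset.sum_congr rfl fun l _ => Finset.sum_congr rfl fun j _ => (hswap l ω j).symm)]
    rw [hev, ← ENNReal.ofReal_toReal (measure_ne_top P _)]
    exact ENNReal.ofReal_le_ofReal hch
  -- the good event and its complement
  set E : Set Ωs := {ω | ∀ i, (∑ l, ∑ j, A l ω i j) ≤
    (1 + (2 + 2 * Real.sqrt 10) / 3) * (thetaMax θ * (∑ i', θ i') * L)} with hEdef
  have hconst : (1 + (2 + 2 * Real.sqrt 10) / 3) * M = (5 + 2 * Real.sqrt 10) / 3 * M := by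
    ring
  have hSmeas : ∀ i : Fin n, Measurable fun ω => ∑ l, ∑ j, A l ω i j := by
    intro i
    exact Finset.measurable_sum _ fun l _ => Finset.measurable_sum _ fun j _ => hmeas l i j
  have hEmeas : MeasurableSet E := by
    have : E = ⋂ i : Fin n, {ω | (∑ l, ∑ j, A l ω i j) ≤
        (1 + (2 + 2 * Real.sqrt 10) / 3) * (thetaMax θ * (∑ i', θ i') * L)} := by
      ext ω; simp [hEdef, Set.mem_iInter]
    rw [this]
    exact MeasurableSet.iInter fun i => measurableSet_le (hSmeas i) measurable_const
  have hnum : (n:ℝ) * Real.exp (-2 * M) ≤ 1 / ((n:ℝ) + L) := by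
    have h1 : Real.exp (-2 * M) ≤ Real.exp (-2 * Real.log ((n:ℝ) + L)) := by
      refine Real.exp_le_exp.2 ?_
      linarith [hsparse]
    have h2 : Real.exp (-2 * Real.log ((n:ℝ) + L)) = 1 / (((n:ℝ) + L) * ((n:ℝ) + L)) := by
      rw [show (-2:ℝ) * Real.log ((n:ℝ) + L)
          = -(Real.log ((n:ℝ) + L) + Real.log ((n:ℝ) + L)) by ring,
        Real.exp_neg, Real.exp_add, Real.exp_log hx0, one_div]
    have hnx : (n:ℝ) ≤ (n:ℝ) + L := by linarith
    calc (n:ℝ) * Real.exp (-2 * M) ≤ ((n:ℝ) + L) * (1 / (((n:ℝ) + L) * ((n:ℝ) + L))) := by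
          refine mul_le_mul hnx (h1.trans_eq h2) (Real.exp_pos _).le (by linarith)
      _ = 1 / ((n:ℝ) + L) := by field_simp
  have hcompl : P Eᶜ ≤ ENNReal.ofReal (1 / ((n:ℝ) + L)) := by
    have hsub : Eᶜ ⊆ ⋃ i : Fin n,
        {ω | (5 + 2 * Real.sqrt 10) / 3 * M ≤ ∑ l, ∑ j, A l ω i j} := by
      intro ω hω
      simp only [hEdef, Set.mem_compl_iff, Set.mem_setOf_eq, not_forall, not_le] at hω
      obtain ⟨i, hi⟩ := hω
      refine Set.mem_iUnion.2 ⟨i, ?_⟩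
      rw [Set.mem_setOf_eq, ← hconst]
      exact le_of_lt hi
    calc P Eᶜ ≤ P (⋃ i : Fin n,
          {ω | (5 + 2 * Real.sqrt 10) / 3 * M ≤ ∑ l, ∑ j, A l ω i j}) := measure_mono hsub
      _ ≤ ∑' i : Fin n, P {ω | (5 + 2 * Real.sqrt 10) / 3 * M ≤ ∑ l, ∑ j, A l ω i j} :=
          measure_iUnion_le _
      _ = ∑ i : Fin n, P {ω | (5 + 2 * Real.sqrt 10) / 3 * M ≤ ∑ l, ∑ j, A l ω i j} :=
          tsum_fintype _
      _ ≤ ∑ _i : Fin n, ENNReal.ofReal (Real.exp (-2 * M)) :=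
          Finset.sum_le_sum fun i _ => key i
      _ = (n : ℝ≥0∞) * ENNReal.ofReal (Real.exp (-2 * M)) := by
          rw [Finset.sum_const, Finset.card_univ, Fintype.card_fin, nsmul_eq_mul]
      _ = ENNReal.ofReal ((n:ℝ) * Real.exp (-2 * M)) := by
          rw [ENNReal.ofReal_mul (Nat.cast_nonneg n), ENNReal.ofReal_natCast]
      _ ≤ ENNReal.ofReal (1 / ((n:ℝ) + L)) := ENNReal.ofReal_le_ofReal hnum
  have hPE : P E = 1 - P Eᶜ := by
    have h := prob_compl_eq_one_sub (μ := P) hEmeas.compl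
    rwa [compl_compl] at h
  have hgoal : ENNReal.ofReal (1 - 1 / ((n:ℝ) + L))
      = 1 - ENNReal.ofReal (1 / ((n:ℝ) + L)) := by
    rw [ENNReal.ofReal_sub _ (by positivity), ENNReal.ofReal_one]
  calc ENNReal.ofReal (1 - 1 / ((n:ℝ) + L)) = 1 - ENNReal.ofReal (1 / ((n:ℝ) + L)) := hgoal
    _ ≤ 1 - P Eᶜ := tsub_le_tsub_left hcompl 1
    _ = P E := hPE.symm


end
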